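/- Let Δ be a finite-dimensional building and let α₁, α₂ be two roots in Δ having the same wall M as their boundary. Then α₁ ∪ α₂ is an apartment of Δ (in the complete apartment system) if and only if there exists a panel P ∈ M such that the chamber C₁ ∈ α₁ containing P is different from the chamber C₂ ∈ α₂ containing P. -/

import Mathlib

/-!
Common framework: simplicial buildings of type `(W,S)`.

A building of type `(W,S)` is modelled as a finite-dimensional simplicial
complex (a downward-closed set of finite sets of vertices, all of whose
simplices are contained in maximal simplices, the *chambers*, having a common
finite number `rank` of vertices), together with a Weyl distance function
`delta` on chambers satisfying the usual axioms of a `W`-metric building,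
compatible with the simplicial structure (two distinct chambers are at Weyl
distance a simple reflection iff they share a panel), and in which any two
chambers lie in a common isometrically embedded copy of `W` (an apartment).

Apartments (members of the *complete* apartment system) are the subcomplexes
generated by the chamber sets of isometric copies of `W`, which by a theorem
of Tits are exactly the subcomplexes isomorphic to the Coxeter complex
`Σ(W,S)`.
-/

namespace IntersectionsOfApartments

open Set

/-- The set of chambers of a half-apartment (root) of the Coxeter complex
`Σ(W,S)`: given a pair of adjacent chambers `w` and `w * sᵢ`, it consists of
all chambers strictly nearer to `w` than to `w * sᵢ`. -/
def IsHalfSpace {B W : Type*} [Group W] {M : CoxeterMatrix B}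
    (cs : CoxeterSystem M W) (H : Set W) : Prop :=
  ∃ (w : W) (i : B),
    H = {v : W | cs.length (w⁻¹ * v) < cs.length ((w * cs.simple i)⁻¹ * v)}

/-- A Coxeter matrix is irreducible if its Coxeter diagram is connected,
i.e. the index set cannot be split into two nonempty mutually commuting
parts. -/
def IsIrreducibleMatrix {B : Type*} (M : CoxeterMatrix B) : Prop :=
  ∀ J : Set B, J.Nonempty → Jᶜ.Nonempty → ∃ i ∈ J, ∃ j ∈ Jᶜ, M i j ≠ 2

/-- A Coxeter group is of affine type iff it is infinite and virtually
abelian (this characterizes the affine ones among the irreducible Coxeter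
groups). -/
def IsAffineCoxeterGroup (W : Type*) [Group W] : Prop :=
  Infinite W ∧ ∃ H : Subgroup W, H.FiniteIndex ∧ ∀ a ∈ H, ∀ b ∈ H, a * b = b * a

/-- A (finite-dimensional, simplicial) building of type `(W,S)` on the vertex
type `V`. -/
structure Building {B W : Type*} [Group W] {M : CoxeterMatrix B}
    (cs : CoxeterSystem M W) (V : Type*) [DecidableEq V] where
  /-- The simplices of the building. -/
  faces : Set (Finset V)
  /-- The faces of a simplex are simplices. -/
  down_closed : ∀ ⦃A C : Finset V⦄, C ∈ faces → A ⊆ C → A ∈ faces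
  /-- The number of vertices of a chamber (`= dim Δ + 1`); in particular the
  building is finite-dimensional. -/
  rank : ℕ
  rank_pos : 0 < rank
  card_le_rank : ∀ A ∈ faces, A.card ≤ rank
  /-- Every simplex is a face of a chamber. -/
  exists_chamber_superset : ∀ A ∈ faces, ∃ C ∈ faces, A ⊆ C ∧ C.card = rank
  /-- The Weyl distance function (its values on non-chambers are irrelevant). -/
  delta : Finset V → Finset V → W
  delta_eq_one_iff : ∀ ⦃C D : Finset V⦄, C ∈ faces → D ∈ faces →
    C.card = rank → D.card = rank → (delta C D = 1 ↔ C = D)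
  delta_inv : ∀ C D : Finset V, delta D C = (delta C D)⁻¹
  /-- Two chambers are at Weyl distance a simple reflection iff they are
  distinct and share a panel (compatibility of the `W`-metric and the
  simplicial structures). -/
  delta_simple_iff : ∀ ⦃C D : Finset V⦄, C ∈ faces → D ∈ faces →
    C.card = rank → D.card = rank →
    ((∃ i : B, delta C D = cs.simple i) ↔ (C ≠ D ∧ (C ∩ D).card + 1 = rank))
  delta_triangle : ∀ ⦃C D E : Finset V⦄, C ∈ faces → D ∈ faces → E ∈ faces →
    C.card = rank → D.card = rank → E.card = rank →
    ∀ i : B, delta D E = cs.simple i →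
    delta C E = delta C D ∨ delta C E = delta C D * cs.simple i
  delta_mul_simple : ∀ ⦃C D E : Finset V⦄, C ∈ faces → D ∈ faces → E ∈ faces →
    C.card = rank → D.card = rank → E.card = rank →
    ∀ i : B, delta D E = cs.simple i →
    cs.length (delta C D * cs.simple i) = cs.length (delta C D) + 1 →
    delta C E = delta C D * cs.simple i
  exists_delta_simple : ∀ ⦃C : Finset V⦄, C ∈ faces → C.card = rank →
    ∀ i : B, ∃ D ∈ faces, D.card = rank ∧ delta C D = cs.simple i
  /-- Any two chambers lie in a common apartment: there is an isometrically
  embedded copy of `W` containing both. -/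
  pair_in_apartment : ∀ ⦃C D : Finset V⦄, C ∈ faces → D ∈ faces →
    C.card = rank → D.card = rank →
    ∃ f : W → Finset V, (∀ w, f w ∈ faces ∧ (f w).card = rank) ∧
      (∀ u v : W, delta (f u) (f v) = u⁻¹ * v) ∧ (∃ u, f u = C) ∧ (∃ v, f v = D)

namespace Building

variable {B W V : Type*} [Group W] [DecidableEq V] {M : CoxeterMatrix B}
  {cs : CoxeterSystem M W}

/-- The chambers: the simplices with the maximal number `rank` of vertices. -/
def chambers (Δ : Building cs V) : Set (Finset V) :=
  {C ∈ Δ.faces | C.card = Δ.rank}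

/-- The panels: the codimension-one simplices. -/
def IsPanel (Δ : Building cs V) (P : Finset V) : Prop :=
  P ∈ Δ.faces ∧ P.card + 1 = Δ.rank

/-- Two chambers are adjacent if they are distinct and share a common panel. -/
def Adjacent (Δ : Building cs V) (C D : Finset V) : Prop :=
  C ∈ Δ.chambers ∧ D ∈ Δ.chambers ∧ C ≠ D ∧ (C ∩ D).card + 1 = Δ.rank

/-- The gallery distance between two chambers. -/
noncomputable def dist (Δ : Building cs V) (C D : Finset V) : ℕ :=
  cs.length (Δ.delta C D)

/-- A gallery: a nonempty sequence of chambers in which consecutive members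
are adjacent. -/
def IsGallery (Δ : Building cs V) (l : List (Finset V)) : Prop :=
  l ≠ [] ∧ (∀ C ∈ l, C ∈ Δ.chambers) ∧ l.Chain' Δ.Adjacent

/-- A gallery from `C` to `D`. -/
def IsGalleryFromTo (Δ : Building cs V) (C D : Finset V)
    (l : List (Finset V)) : Prop :=
  Δ.IsGallery l ∧ l.head? = some C ∧ l.getLast? = some D

/-- A minimal gallery from `C` to `D`: a gallery whose length realizes the
gallery distance. -/
def IsMinimalGallery (Δ : Building cs V) (C D : Finset V)
    (l : List (Finset V)) : Prop :=
  Δ.IsGalleryFromTo C D l ∧ l.length = Δ.dist C D + 1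

/-- A set of chambers is convex if it contains every chamber on every minimal
gallery between two of its members. -/
def IsConvexChamberSet (Δ : Building cs V) (K : Set (Finset V)) : Prop :=
  K ⊆ Δ.chambers ∧
    ∀ C ∈ K, ∀ D ∈ K, ∀ l, Δ.IsMinimalGallery C D l → ∀ E ∈ l, E ∈ K

/-- A subcomplex: a downward-closed set of simplices of the building. -/
def IsSubcomplex (Δ : Building cs V) (κ : Set (Finset V)) : Prop :=
  κ ⊆ Δ.faces ∧ ∀ ⦃A C : Finset V⦄, C ∈ κ → A ⊆ C → A ∈ κ

/-- The chambers of a set of simplices. -/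
def Ch (Δ : Building cs V) (κ : Set (Finset V)) : Set (Finset V) :=
  κ ∩ Δ.chambers

/-- A chamber subcomplex: a subcomplex each of whose simplices is contained
in some chamber (of the building) belonging to the subcomplex. -/
def IsChamberSubcomplex (Δ : Building cs V) (κ : Set (Finset V)) : Prop :=
  Δ.IsSubcomplex κ ∧ ∀ A ∈ κ, ∃ C ∈ Δ.Ch κ, A ⊆ C

/-- A convex chamber subcomplex: a chamber subcomplex whose set of chambers is
convex (i.e. closed under minimal galleries). -/
def IsConvexChamberSubcomplex (Δ : Building cs V) (κ : Set (Finset V)) : Prop :=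
  Δ.IsChamberSubcomplex κ ∧ Δ.IsConvexChamberSet (Δ.Ch κ)

/-- A convex subcomplex: an intersection of (a nonempty family of) convex
chamber subcomplexes. -/
def IsConvexSubcomplex (Δ : Building cs V) (κ : Set (Finset V)) : Prop :=
  ∃ 𝒦 : Set (Set (Finset V)), 𝒦.Nonempty ∧
    (∀ μ ∈ 𝒦, Δ.IsConvexChamberSubcomplex μ) ∧ κ = ⋂₀ 𝒦

/-- The convex closure (convex hull) of a set of simplices: the intersection
of all convex subcomplexes containing it. -/
def convexClosure (Δ : Building cs V) (S : Set (Finset V)) : Set (Finset V) :=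
  ⋂₀ {κ : Set (Finset V) | Δ.IsConvexSubcomplex κ ∧ S ⊆ κ}

/-- Thickness: every panel lies in at least three chambers. -/
def Thick (Δ : Building cs V) : Prop :=
  ∀ P : Finset V, Δ.IsPanel P →
    ∃ T : Finset (Finset V), 3 ≤ T.card ∧
      ↑T ⊆ {C : Finset V | C ∈ Δ.chambers ∧ P ⊆ C}

/-- Every panel lies in at least four chambers. -/
def FourChambersPerPanel (Δ : Building cs V) : Prop :=
  ∀ P : Finset V, Δ.IsPanel P →
    ∃ T : Finset (Finset V), 4 ≤ T.card ∧
      ↑T ⊆ {C : Finset V | C ∈ Δ.chambers ∧ P ⊆ C}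

/-- An isometric embedding of `W` into the chamber set of the building; its
image is the chamber set of an apartment. -/
def IsIsometry (Δ : Building cs V) (f : W → Finset V) : Prop :=
  (∀ w : W, f w ∈ Δ.chambers) ∧ ∀ u v : W, Δ.delta (f u) (f v) = u⁻¹ * v

/-- The subcomplex generated by the chambers `f w`, `w ∈ H`. -/
def genBy (Δ : Building cs V) (f : W → Finset V) (H : Set W) :
    Set (Finset V) :=
  {A : Finset V | ∃ w ∈ H, A ⊆ f w}

/-- The subcomplex generated by the image of `f : W → Finset V`. -/
def aptOf (Δ : Building cs V) (f : W → Finset V) : Set (Finset V) :=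
  Δ.genBy f Set.univ

/-- An apartment (member of the *complete* apartment system): the subcomplex
generated by an isometrically embedded copy of `W`; equivalently, a
subcomplex isomorphic to the Coxeter complex `Σ(W,S)`. -/
def IsApartment (Δ : Building cs V) (Ω : Set (Finset V)) : Prop :=
  ∃ f : W → Finset V, Δ.IsIsometry f ∧ Ω = Δ.aptOf f

/-- An apartment system: a family of apartments such that any two chambers of
the building lie in a common member. -/
def IsApartmentSystem (Δ : Building cs V) (𝒜 : Set (Set (Finset V))) : Prop :=
  (∀ Ω ∈ 𝒜, Δ.IsApartment Ω) ∧
    ∀ C ∈ Δ.chambers, ∀ D ∈ Δ.chambers, ∃ Ω ∈ 𝒜, C ∈ Ω ∧ D ∈ Ω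

/-- `α` is a root of the building with boundary wall `Mw`: in some apartment
(given by an isometry `f`), `α` is the subcomplex generated by the chambers of
a half-space `H`, and `Mw = α ∩ (-α)` is the intersection of `α` with the
opposite root. -/
def IsRootWithWall (Δ : Building cs V) (α Mw : Set (Finset V)) : Prop :=
  ∃ (f : W → Finset V) (H : Set W), Δ.IsIsometry f ∧ IsHalfSpace cs H ∧
    α = Δ.genBy f H ∧ Mw = Δ.genBy f H ∩ Δ.genBy f Hᶜ

/-- A root of the building. -/
def IsRoot (Δ : Building cs V) (α : Set (Finset V)) : Prop :=
  ∃ Mw, Δ.IsRootWithWall α Mw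

/-- A wall of the building: the boundary `α ∩ (-α)` of a root `α`. -/
def IsWall (Δ : Building cs V) (Mw : Set (Finset V)) : Prop :=
  ∃ α, Δ.IsRootWithWall α Mw

/-- `Mw` is a wall of the apartment `Ω`. -/
def IsWallIn (Δ : Building cs V) (Ω Mw : Set (Finset V)) : Prop :=
  ∃ (f : W → Finset V) (H : Set W), Δ.IsIsometry f ∧ IsHalfSpace cs H ∧
    Ω = Δ.aptOf f ∧ Mw = Δ.genBy f H ∩ Δ.genBy f Hᶜ

/-- The link of a simplex `A`. -/
def link (Δ : Building cs V) (A : Finset V) : Set (Finset V) :=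
  {Bf ∈ Δ.faces | A ∩ Bf = ∅ ∧ A ∪ Bf ∈ Δ.faces}

/-- An apartment of the building `Lk_Δ(A)` (with its complete apartment
system): these are exactly the links `Lk_Σ(A)` of `A` in the apartments `Σ` of
`Δ` containing `A`. -/
def IsApartmentOfLink (Δ : Building cs V) (A : Finset V)
    (ApA : Set (Finset V)) : Prop :=
  ∃ Ω, Δ.IsApartment Ω ∧ A ∈ Ω ∧
    ApA = {Bf ∈ Δ.link A | A ∪ Bf ∈ Ω}

end Building

namespace StatementElevenAux

open List

noncomputable section
open Classical

variable {B W : Type*} [Group W] {M : CoxeterMatrix B} (cs : CoxeterSystem M W)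

local prefix:100 "s" => cs.simple
local prefix:100 "π" => cs.wordProd
local prefix:100 "ℓ" => cs.length

/-- The building block of the reflection-cocycle permutation representation. -/
def etaFun (i : B) : W × ZMod 2 → W × ZMod 2 :=
  fun x => (s i * x.1 * s i, x.2 + if x.1 = s i then 1 else 0)

lemma zmod2_add_self : ∀ c : ZMod 2, c + c = 0 := by decide

lemma conj_eq_iff (a u y : W) : a * u * a = y ↔ u = a⁻¹ * y * a⁻¹ := by
  constructor
  · intro h; rw [← h]; group
  · intro h; rw [h]; group

lemma conj_eq_iff' (a u y : W) : a * u * a⁻¹ = y ↔ u = a⁻¹ * y * a := by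
  constructor
  · intro h; rw [← h]; group
  · intro h; rw [h]; group

lemma etaFun_invol (i : B) : Function.Involutive (etaFun cs i) := by
  rintro ⟨t, ε⟩
  unfold etaFun
  simp only
  have h1 : s i * (s i * t * s i) * s i = t := by
    group
    simp [cs.simple_sq]
  have h2 : (s i * t * s i = s i) ↔ (t = s i) := by
    rw [conj_eq_iff, cs.inv_simple]
    constructor
    · intro h; rw [h]; simp [cs.simple_sq]
    · rintro rfl; simp [cs.simple_sq]
  ext
  · exact h1
  · simp only [h2]
    rcases Classical.em (t = s i) with h | h
    · simp [h, add_assoc, zmod2_add_self]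
    · simp [h]

/-- The involution swapping the two halves along the wall of `s i`. -/
def eta (i : B) : Equiv.Perm (W × ZMod 2) := (etaFun_invol cs i).toPerm

lemma eta_apply (i : B) (t : W) (ε : ZMod 2) :
    eta cs i (t, ε) = (s i * t * s i, ε + if t = s i then 1 else 0) := rfl

lemma eta_pow_apply (i j : B) (k : ℕ) (t : W) (ε : ZMod 2) :
    ((eta cs i * eta cs j) ^ k) (t, ε) =
      ((s i * s j) ^ k * t * ((s i * s j) ^ k)⁻¹,
        ε + ∑ n ∈ Finset.range (2 * k),
          (if t = ((s i * s j)⁻¹) ^ n * s j then 1 else 0 : ZMod 2)) := by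
  have hxinv : (s i * s j)⁻¹ = s j * s i := by
    rw [mul_inv_rev, cs.inv_simple, cs.inv_simple]
  have hsjx : s j * (s i * s j) = (s i * s j)⁻¹ * s j := by
    rw [hxinv, mul_assoc]
  induction k generalizing t ε with
  | zero => simp
  | succ k ih =>
    have hstep : (eta cs i * eta cs j) (t, ε) =
        ((s i * s j) * t * (s i * s j)⁻¹,
          ε + ((if t = ((s i * s j)⁻¹) ^ 0 * s j then 1 else 0)
             + (if t = ((s i * s j)⁻¹) ^ 1 * s j then 1 else 0) : ZMod 2)) := by
      show eta cs i (eta cs j (t, ε)) = _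
      rw [eta_apply, eta_apply]
      have hc : (s j * t * s j = s i) ↔ (t = ((s i * s j)⁻¹) ^ 1 * s j) := by
        rw [conj_eq_iff, cs.inv_simple, pow_one, hxinv, mul_assoc]
      have hc0 : (t = s j) ↔ (t = ((s i * s j)⁻¹) ^ 0 * s j) := by
        rw [pow_zero, one_mul]
      rw [Prod.ext_iff]
      constructor
      · simp only [mul_inv_rev, cs.inv_simple]
        group
      · simp only [hc, hc0]
        rcases Classical.em (t = ((s i * s j)⁻¹) ^ 0 * s j) with h | h <;>
          rcases Classical.em (t = ((s i * s j)⁻¹) ^ 1 * s j) with h' | h' <;>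
            simp [h, h', add_assoc]
    rw [pow_succ, Equiv.Perm.mul_apply, hstep, ih]
    have hfst : (s i * s j) ^ k * ((s i * s j) * t * (s i * s j)⁻¹) * ((s i * s j) ^ k)⁻¹ =
        (s i * s j) ^ (k + 1) * t * ((s i * s j) ^ (k + 1))⁻¹ := by
      generalize (s i * s j) = x
      rw [pow_succ']
      group
    have hshift : ∀ n : ℕ,
        ((s i * s j) * t * (s i * s j)⁻¹ = ((s i * s j)⁻¹) ^ n * s j)
          ↔ (t = ((s i * s j)⁻¹) ^ (n + 2) * s j) := by
      intro n
      rw [conj_eq_iff']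
      have key : (s i * s j)⁻¹ * (((s i * s j)⁻¹) ^ n * s j) * (s i * s j)
          = ((s i * s j)⁻¹) ^ (n + 2) * s j := by
        have h1 : (s i * s j)⁻¹ * (((s i * s j)⁻¹) ^ n * s j) * (s i * s j)
            = (s i * s j)⁻¹ * ((s i * s j)⁻¹) ^ n * (s j * (s i * s j)) := by
          generalize (s i * s j) = x
          group
        rw [h1, hsjx]
        have h2 : (s i * s j)⁻¹ * ((s i * s j)⁻¹) ^ n * ((s i * s j)⁻¹ * s j)
            = (((s i * s j)⁻¹) ^ (n + 2)) * s j := by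
          generalize (s i * s j)⁻¹ = y
          have : y * y ^ n * (y * s j) = (y ^ n * y * y) * s j := by group
          rw [this, ← pow_succ, ← pow_succ]
        exact h2
      rw [key]
    have hsum : (∑ n ∈ Finset.range (2 * k),
          (if (s i * s j) * t * (s i * s j)⁻¹ = ((s i * s j)⁻¹) ^ n * s j then 1 else 0 : ZMod 2))
        = ∑ n ∈ Finset.range (2 * k),
          (if t = ((s i * s j)⁻¹) ^ (n + 2) * s j then 1 else 0 : ZMod 2) := by
      refine Finset.sum_congr rfl fun n _ => ?_
      rw [hshift n]
    have hresum : ∑ n ∈ Finset.range (2 * (k + 1)),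
          (if t = ((s i * s j)⁻¹) ^ n * s j then 1 else 0 : ZMod 2)
        = ((∑ n ∈ Finset.range (2 * k),
            (if t = ((s i * s j)⁻¹) ^ (n + 2) * s j then 1 else 0 : ZMod 2))
           + (if t = ((s i * s j)⁻¹) ^ 1 * s j then 1 else 0))
           + (if t = ((s i * s j)⁻¹) ^ 0 * s j then 1 else 0) := by
      have h2 : 2 * (k + 1) = (2 * k + 1) + 1 := by ring
      rw [h2, Finset.sum_range_succ' _ (2 * k + 1), Finset.sum_range_succ' _ (2 * k)]
    rw [Prod.ext_iff]
    constructor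
    · exact hfst
    · simp only
      rw [hsum, hresum]
      ring

lemma eta_liftable : M.IsLiftable (fun i => eta cs i) := by
  intro i j
  apply Equiv.ext
  rintro ⟨t, ε⟩
  rw [eta_pow_apply, cs.simple_mul_simple_pow i j]
  have hsum : ∑ n ∈ Finset.range (2 * M i j),
      (if t = ((s i * s j)⁻¹) ^ n * s j then 1 else 0 : ZMod 2) = 0 := by
    have h2 : 2 * M i j = M i j + M i j := by ring
    rw [h2, Finset.sum_range_add]
    have hper : ∀ n : ℕ,
        (if t = ((s i * s j)⁻¹) ^ (M i j + n) * s j then 1 else 0 : ZMod 2)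
          = (if t = ((s i * s j)⁻¹) ^ n * s j then 1 else 0 : ZMod 2) := by
      intro n
      have : ((s i * s j)⁻¹) ^ (M i j + n) = ((s i * s j)⁻¹) ^ n := by
        rw [pow_add, inv_pow, cs.simple_mul_simple_pow i j, inv_one, one_mul]
      rw [this]
    rw [Finset.sum_congr rfl fun n _ => hper n]
    exact zmod2_add_self _
  rw [hsum]
  simp

/-- The reflection-cocycle representation `W →* Perm (W × ZMod 2)`. -/
def nphom : W →* Equiv.Perm (W × ZMod 2) :=
  cs.lift ⟨fun i => eta cs i, eta_liftable cs⟩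

lemma nphom_simple (i : B) : nphom cs (s i) = eta cs i :=
  cs.lift_apply_simple (eta_liftable cs) i

lemma nphom_wordProd (ω : List B) (t : W) (ε : ZMod 2) :
    nphom cs (π ω) (t, ε) =
      (π ω * t * (π ω)⁻¹, ε + ((cs.rightInvSeq ω).count t : ZMod 2)) := by
  induction ω generalizing ε with
  | nil => simp
  | cons k ω ih =>
    rw [cs.wordProd_cons, map_mul, Equiv.Perm.mul_apply, ih, nphom_simple, eta_apply]
    have hris : cs.rightInvSeq (k :: ω) = ((π ω)⁻¹ * s k * π ω) :: cs.rightInvSeq ω := rfl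
    rw [Prod.ext_iff]
    constructor
    · simp only [mul_inv_rev, cs.inv_simple]
      group
    · simp only [hris, List.count_cons, beq_iff_eq]
      have hcond : (π ω * t * (π ω)⁻¹ = s k) ↔ ((π ω)⁻¹ * s k * π ω = t) := by
        rw [conj_eq_iff']
        constructor
        · intro h; rw [h]
        · intro h; rw [← h]
      rcases Classical.em ((π ω)⁻¹ * s k * π ω = t) with h | h
      · rw [if_pos (hcond.mpr h), if_pos h]
        push_cast
        ring
      · rw [if_neg (fun hc => h (hcond.mp hc)), if_neg h]
        push_cast
        ring

/-- Parity of the number of times the wall of `t` is crossed by (any word for) `w`,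
counted on the right. -/
def np (w t : W) : ZMod 2 := (nphom cs w (t, 0)).2

lemma np_wordProd (ω : List B) (t : W) :
    np cs (π ω) t = ((cs.rightInvSeq ω).count t : ZMod 2) := by
  unfold np
  rw [nphom_wordProd]
  simp

lemma nphom_apply (w t : W) (ε : ZMod 2) :
    nphom cs w (t, ε) = (w * t * w⁻¹, ε + np cs w t) := by
  obtain ⟨ω, -, rfl⟩ := cs.exists_reduced_word' w
  rw [nphom_wordProd, np_wordProd]

lemma np_mul (a b t : W) :
    np cs (a * b) t = np cs b t + np cs a (b * t * b⁻¹) := by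
  have h1 : nphom cs (a * b) (t, 0) = ((a * b) * t * (a * b)⁻¹, 0 + np cs (a * b) t) :=
    nphom_apply cs (a * b) t 0
  have h2 : nphom cs (a * b) (t, 0) = nphom cs a (nphom cs b (t, 0)) := by
    rw [map_mul]; rfl
  rw [nphom_apply cs b t 0, nphom_apply cs a (b * t * b⁻¹) (0 + np cs b t)] at h2
  rw [h2] at h1
  have h3 := (Prod.ext_iff.mp h1).2
  simp only [zero_add] at h3
  exact h3.symm

lemma np_one (t : W) : np cs 1 t = 0 := by
  unfold np
  rw [map_one]
  rfl

lemma np_simple (k : B) (t : W) : np cs (s k) t = if t = s k then 1 else 0 := by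
  unfold np
  rw [nphom_simple, eta_apply]
  simp

lemma zmod2_cancel {a b : ZMod 2} (h : a + b = 0) : a = b := by
  revert a b; decide

lemma np_conj (v : W) (t : W) : np cs (v⁻¹) (v * t * v⁻¹) = np cs v t := by
  have h := np_mul cs v⁻¹ v t
  rw [inv_mul_cancel, np_one] at h
  exact (zmod2_cancel h.symm).symm

lemma np_refl_self {t : W} (ht : cs.IsReflection t) : np cs t t = 1 := by
  obtain ⟨v, k, rfl⟩ := ht
  have e1 : v * s k * v⁻¹ = (v * s k) * v⁻¹ := by group
  rw [e1, np_mul]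
  have e2 : v⁻¹ * ((v * s k) * v⁻¹) * (v⁻¹)⁻¹ = s k := by group
  rw [e2, np_mul]
  have e3 : s k * s k * (s k)⁻¹ = s k := by
    rw [cs.simple_mul_simple_self, cs.inv_simple, one_mul]
  rw [e3, np_simple, if_pos rfl]
  rw [np_conj cs v (s k)]
  have : ∀ a : ZMod 2, a + (1 + a) = 1 := by decide
  exact this _

lemma zmod2_natCast_eq_one {n : ℕ} (h : (n : ZMod 2) = 1) : n ≠ 0 := by
  intro h0
  rw [h0] at h
  simp at h

lemma np_eq_one_iff {t : W} (ht : cs.IsReflection t) (w : W) :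
    np cs w t = 1 ↔ ℓ (w * t) < ℓ w := by
  constructor
  · intro h
    obtain ⟨ω, hω, rfl⟩ := cs.exists_reduced_word' w
    rw [np_wordProd] at h
    have hmem : t ∈ cs.rightInvSeq ω := by
      by_contra hmem
      rw [List.count_eq_zero_of_not_mem hmem] at h
      simp at h
    exact (cs.isRightInversion_of_mem_rightInvSeq hω hmem).2
  · intro h
    have h1 : np cs ((w * t) * t) t = np cs t t + np cs (w * t) (t * t * t⁻¹) :=
      np_mul cs (w * t) t t
    have e1 : (w * t) * t = w := by
      rw [mul_assoc, ht.mul_self, mul_one]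
    have e2 : t * t * t⁻¹ = t := by
      rw [ht.mul_self, one_mul, ht.inv]
    rw [e1, e2, np_refl_self cs ht] at h1
    have h2 : np cs (w * t) t = 0 := by
      rcases (by decide : ∀ a : ZMod 2, a = 0 ∨ a = 1) (np cs (w * t) t) with h2 | h2
      · exact h2
      · exfalso
        obtain ⟨ω, hω, hwt⟩ := cs.exists_reduced_word' (w * t)
        rw [hwt, np_wordProd] at h2
        have hmem : t ∈ cs.rightInvSeq ω := by
          by_contra hmem
          rw [List.count_eq_zero_of_not_mem hmem] at h2
          simp at h2
        have := (cs.isRightInversion_of_mem_rightInvSeq hω hmem).2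
        rw [← hwt, mul_assoc, ht.mul_self, mul_one] at this
        omega
    rw [h2] at h1
    rw [h1]
    decide

lemma np_ne_one_iff {t : W} (ht : cs.IsReflection t) (w : W) :
    np cs w t = 0 ↔ ℓ w < ℓ (w * t) := by
  have hne := ht.length_mul_left_ne w
  have hdi := np_eq_one_iff cs ht w
  rcases (by decide : ∀ a : ZMod 2, a = 0 ∨ a = 1) (np cs w t) with h | h <;>
    rw [h] at hdi ⊢
  · simp only [true_iff]
    have : ¬ ℓ (w * t) < ℓ w := by
      intro hc
      exact absurd (hdi.mpr hc) (by decide)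
    omega
  · have hlt := hdi.mp rfl
    constructor
    · intro hc; exact absurd hc (by decide)
    · intro hc; omega

/-- `w` lies on the positive side of the wall of the simple reflection `s i`
(the side of the identity). -/
def Pos (i : B) (w : W) : Prop := ℓ w < ℓ (s i * w)

lemma pos_iff_np (i : B) (w : W) : Pos cs i w ↔ np cs (w⁻¹) (s i) = 0 := by
  rw [np_ne_one_iff cs (cs.isReflection_simple i) w⁻¹]
  have e : w⁻¹ * s i = (s i * w)⁻¹ := by
    rw [mul_inv_rev, cs.inv_simple]
  rw [e, cs.length_inv, cs.length_inv]
  rfl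

lemma not_pos_iff_np (i : B) (w : W) : ¬ Pos cs i w ↔ np cs (w⁻¹) (s i) = 1 := by
  rw [pos_iff_np]
  rcases (by decide : ∀ a : ZMod 2, a = 0 ∨ a = 1) (np cs (w⁻¹) (s i)) with h | h <;>
    rw [h] <;> simp

lemma pos_one (i : B) : Pos cs i 1 := by
  unfold Pos
  rw [mul_one, cs.length_one, cs.length_simple]
  omega

lemma not_pos_simple (i : B) : ¬ Pos cs i (s i) := by
  unfold Pos
  rw [cs.simple_mul_simple_self, cs.length_one, cs.length_simple]
  omega

lemma pos_simple_mul_iff (i : B) (w : W) : Pos cs i (s i * w) ↔ ¬ Pos cs i w := by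
  unfold Pos
  rw [cs.simple_mul_simple_cancel_left]
  have := cs.length_simple_mul_ne w i
  omega

lemma cx1 {i σ : B} {u : W} (hu : Pos cs i u) :
    s i * u = u * s σ ↔ ¬ Pos cs i (u * s σ) := by
  rw [not_pos_iff_np]
  have e1 : (u * s σ)⁻¹ = s σ * u⁻¹ := by
    rw [mul_inv_rev, cs.inv_simple]
  rw [e1, np_mul, (pos_iff_np cs i u).mp hu, np_simple, zero_add]
  have e2 : u⁻¹ * s i * u⁻¹⁻¹ = u⁻¹ * (s i * u) := by group
  rw [e2]
  constructor
  · intro h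
    rw [h]
    rw [if_pos (by group)]
  · intro h
    have h' : u⁻¹ * (s i * u) = s σ := by
      by_contra hc
      rw [if_neg hc] at h
      exact absurd h (by decide)
    calc s i * u = u * (u⁻¹ * (s i * u)) := by group
      _ = u * s σ := by rw [h']

lemma cx2 {i : B} {u v : W} (hu : Pos cs i u) (hv : Pos cs i v) :
    ℓ (u⁻¹ * v) < ℓ (u⁻¹ * (s i * v)) := by
  set t := v⁻¹ * (s i * v) with ht_def
  have ht : cs.IsReflection t := ⟨v⁻¹, i, by rw [ht_def]; group⟩
  have key : np cs (u⁻¹ * v) t = 0 := by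
    rw [np_mul]
    have e1 : v * t * v⁻¹ = s i := by rw [ht_def]; group
    rw [e1, (pos_iff_np cs i u).mp hu]
    have e2 : np cs v t = 0 := by
      rw [np_ne_one_iff cs ht v]
      have e3 : v * t = s i * v := by rw [ht_def]; group
      rw [e3]
      exact hv
    rw [e2]
    rfl
  have := (np_ne_one_iff cs ht (u⁻¹ * v)).mp key
  have e4 : u⁻¹ * v * t = u⁻¹ * (s i * v) := by rw [ht_def]; group
  rwa [e4] at this

lemma cx2' {i : B} {u v : W} (hu : Pos cs i u) (hv : Pos cs i v)
    (h1 : ℓ (v⁻¹ * (s i * v)) = 1) :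
    ℓ (u⁻¹ * (s i * v)) = ℓ (u⁻¹ * v) + 1 := by
  have hle : ℓ (u⁻¹ * (s i * v)) ≤ ℓ (u⁻¹ * v) + 1 := by
    have e : u⁻¹ * (s i * v) = (u⁻¹ * v) * (v⁻¹ * (s i * v)) := by group
    rw [e]
    have := cs.length_mul_le (u⁻¹ * v) (v⁻¹ * (s i * v))
    omega
  have hlt := cx2 cs hu hv
  omega

section cx3

variable {p q : W} {i j : B}

lemma cx3ab (hp : Pos cs i p) (hq : Pos cs j q)
    (hs : p⁻¹ * (s i * p) = q⁻¹ * (s j * q)) (v : W) :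
    Pos cs j ((q * p⁻¹ * s i) * v) ↔ ¬ Pos cs i v := by
  have e1 : ((q * p⁻¹ * s i) * v)⁻¹ = v⁻¹ * (s i * p * q⁻¹) := by
    rw [mul_inv_rev, mul_inv_rev, mul_inv_rev, cs.inv_simple, inv_inv]
    group
  have hA : (s i * p * q⁻¹) * s j * (s i * p * q⁻¹)⁻¹ = s i := by
    calc (s i * p * q⁻¹) * s j * (s i * p * q⁻¹)⁻¹
        = s i * p * (q⁻¹ * (s j * q)) * p⁻¹ * (s i)⁻¹ := by group
      _ = s i * p * (p⁻¹ * (s i * p)) * p⁻¹ * (s i)⁻¹ := by rw [← hs]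
      _ = s i := by group
  have hB : np cs (s i * p * q⁻¹) (s j) = 1 := by
    have e2 : s i * p * q⁻¹ = (s i * p) * q⁻¹ := by group
    rw [e2, np_mul, (pos_iff_np cs j q).mp hq, zero_add]
    have e3 : q⁻¹ * s j * q⁻¹⁻¹ = q⁻¹ * (s j * q) := by group
    rw [e3, ← hs]
    have htrefl : cs.IsReflection (p⁻¹ * (s i * p)) := ⟨p⁻¹, i, by group⟩
    rw [np_eq_one_iff cs htrefl]
    have e4 : (s i * p) * (p⁻¹ * (s i * p)) = p := by
      rw [show (s i * p) * (p⁻¹ * (s i * p)) = s i * (s i * p) by group,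
        cs.simple_mul_simple_cancel_left]
    rw [e4]
    exact hp
  rw [pos_iff_np, e1, np_mul, hA, hB]
  rcases Classical.em (Pos cs i v) with h | h
  · rw [(pos_iff_np cs i v).mp h]
    constructor
    · intro hc; exact absurd hc (by decide)
    · intro hc; exact absurd h hc
  · rw [(not_pos_iff_np cs i v).mp h]
    constructor
    · intro _; exact h
    · intro _; decide

lemma cx3c (hp : Pos cs i p) (hq : Pos cs j q)
    (hs : p⁻¹ * (s i * p) = q⁻¹ * (s j * q)) {a : W} (ha : Pos cs j a) :
    ¬ Pos cs i ((q * p⁻¹ * s i)⁻¹ * a) := by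
  have e1 : (((q * p⁻¹ * s i)⁻¹ * a))⁻¹ = a⁻¹ * (q * p⁻¹ * s i) := by group
  have hC : (q * p⁻¹ * s i) * s i * (q * p⁻¹ * s i)⁻¹ = s j := by
    calc (q * p⁻¹ * s i) * s i * (q * p⁻¹ * s i)⁻¹
        = q * (p⁻¹ * (s i * p)) * q⁻¹ := by group
      _ = q * (q⁻¹ * (s j * q)) * q⁻¹ := by rw [hs]
      _ = s j := by group
  have hD : np cs (q * p⁻¹ * s i) (s i) = 1 := by
    have e2 : q * p⁻¹ * s i = (q * p⁻¹) * s i := by group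
    rw [e2, np_mul, np_simple, if_pos rfl]
    have e3 : np cs (q * p⁻¹) (s i * s i * (s i)⁻¹) = 0 := by
      have e4 : s i * s i * (s i)⁻¹ = s i := by group
      rw [e4, np_mul]
      rw [(pos_iff_np cs i p).mp hp, zero_add]
      have e5 : p⁻¹ * s i * p⁻¹⁻¹ = p⁻¹ * (s i * p) := by group
      rw [e5, hs]
      have htrefl : cs.IsReflection (q⁻¹ * (s j * q)) := ⟨q⁻¹, j, by group⟩
      rw [np_ne_one_iff cs htrefl]
      have e6 : q * (q⁻¹ * (s j * q)) = s j * q := by group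
      rw [e6]
      exact hq
    rw [e3]
    decide
  rw [not_pos_iff_np, e1, np_mul, hC, hD, (pos_iff_np cs j a).mp ha]
  decide

end cx3

lemma cx4 {i : B} {u v : W} (hu : Pos cs i u) (hv : ¬ Pos cs i v) :
    ∃ y : W, Pos cs i y ∧ ℓ (y⁻¹ * (s i * y)) = 1 ∧
      ℓ (u⁻¹ * (s i * y)) = ℓ (u⁻¹ * y) + 1 ∧
      ℓ (u⁻¹ * (s i * y)) + ℓ ((s i * y)⁻¹ * v) = ℓ (u⁻¹ * v) := by
  obtain ⟨ω, hω, hword⟩ := cs.exists_reduced_word' (u⁻¹ * v)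
  have hPex : ∃ m, ¬ Pos cs i (u * π (ω.take m)) := by
    refine ⟨ω.length, ?_⟩
    rw [List.take_length, ← hword]
    have e : u * (u⁻¹ * v) = v := by group
    rwa [e]
  set k' := Nat.find hPex with hk'def
  have hk'spec : ¬ Pos cs i (u * π (ω.take k')) := Nat.find_spec hPex
  have hk'pos : 0 < k' := by
    rcases Nat.eq_zero_or_pos k' with h0 | h0
    · exfalso
      rw [h0] at hk'spec
      simp only [List.take_zero, cs.wordProd_nil, mul_one] at hk'spec
      exact hk'spec hu
    · exact h0
  have hk'le : k' ≤ ω.length := Nat.find_min' hPex (by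
    rw [List.take_length, ← hword]
    have e : u * (u⁻¹ * v) = v := by group
    rwa [e])
  set k := k' - 1 with hkdef
  have hkk' : k + 1 = k' := by omega
  have hklt : k < ω.length := by omega
  have hkpos : Pos cs i (u * π (ω.take k)) := by
    by_contra hc
    exact absurd (Nat.find_min' hPex hc) (by omega)
  set y := u * π (ω.take k) with hydef
  set σ := ω[k] with hσdef
  have htake : ω.take (k + 1) = ω.take k ++ [σ] := by
    rw [List.take_succ]
    congr
    rw [List.getElem?_eq_getElem hklt]
    rfl
  have hstep : u * π (ω.take (k + 1)) = y * s σ := by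
    rw [htake, cs.wordProd_append, cs.wordProd_singleton, hydef]
    group
  have hnotpos : ¬ Pos cs i (y * s σ) := by
    rw [← hstep, hkk']
    exact hk'spec
  have hwall : s i * y = y * s σ := (cx1 cs hkpos).mpr hnotpos
  have hlen1 : ℓ (y⁻¹ * (s i * y)) = 1 := by
    rw [hwall]
    have e : y⁻¹ * (y * s σ) = s σ := by group
    rw [e, cs.length_simple]
  refine ⟨y, hkpos, hlen1, cx2' cs hu hkpos hlen1, ?_⟩
  have hutake : u⁻¹ * (s i * y) = π (ω.take (k + 1)) := by
    rw [hwall, ← hstep]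
    group
  have hlen2 : ℓ (u⁻¹ * (s i * y)) = k + 1 := by
    rw [hutake, (CoxeterSystem.IsReduced.take hω (k + 1) : ℓ (π (ω.take (k + 1))) = _)]
    rw [List.length_take]
    omega
  have hdrop : (s i * y)⁻¹ * v = π (ω.drop (k + 1)) := by
    have hsplit : π (ω.take (k + 1)) * π (ω.drop (k + 1)) = u⁻¹ * v := by
      rw [← cs.wordProd_append, List.take_append_drop, hword]
    rw [← hutake] at hsplit
    calc (s i * y)⁻¹ * v = (u⁻¹ * (s i * y))⁻¹ * (u⁻¹ * v) := by group
      _ = π (ω.drop (k + 1)) := by rw [← hsplit]; group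
  have hlen3 : ℓ ((s i * y)⁻¹ * v) = ω.length - (k + 1) := by
    rw [hdrop, (CoxeterSystem.IsReduced.drop hω (k + 1) : ℓ (π (ω.drop (k + 1))) = _), List.length_drop]
  have hlenv : ℓ (u⁻¹ * v) = ω.length := by
    rw [hword]; exact hω
  omega

/-! ### Building-side auxiliary lemmas -/

section BuildingAux

variable {cs}
variable {V : Type*} [DecidableEq V] (Δ : Building cs V)

lemma mem_chambers_iff (C : Finset V) :
    C ∈ Δ.chambers ↔ C ∈ Δ.faces ∧ C.card = Δ.rank := Iff.rfl

lemma iso_chamber {f : W → Finset V} (hf : Δ.IsIsometry f) (w : W) :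
    f w ∈ Δ.chambers := hf.1 w

lemma delta_self {C : Finset V} (hC : C ∈ Δ.chambers) : Δ.delta C C = 1 :=
  (Δ.delta_eq_one_iff hC.1 hC.1 hC.2 hC.2).mpr rfl

lemma iso_inj {f : W → Finset V} (hf : Δ.IsIsometry f) : Function.Injective f := by
  intro u v h
  have h1 : Δ.delta (f u) (f v) = u⁻¹ * v := hf.2 u v
  rw [h, delta_self Δ (hf.1 v)] at h1
  exact inv_mul_eq_one.mp h1.symm

lemma chamber_eq_of_subset {C D : Finset V} (hC : C ∈ Δ.chambers) (hD : D ∈ Δ.chambers)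
    (h : C ⊆ D) : C = D :=
  Finset.eq_of_subset_of_card_le h (by rw [hC.2, hD.2])

/-- The product rule for Weyl distances: distances compose when lengths add. -/
lemma delta_comp {C D E : Finset V} (hC : C ∈ Δ.chambers) (hD : D ∈ Δ.chambers)
    (hE : E ∈ Δ.chambers)
    (hadd : ℓ (Δ.delta C D * Δ.delta D E) = ℓ (Δ.delta C D) + ℓ (Δ.delta D E)) :
    Δ.delta C E = Δ.delta C D * Δ.delta D E := by
  suffices H : ∀ n (E : Finset V), E ∈ Δ.chambers → ℓ (Δ.delta D E) ≤ n →
      ℓ (Δ.delta C D * Δ.delta D E) = ℓ (Δ.delta C D) + ℓ (Δ.delta D E) →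
      Δ.delta C E = Δ.delta C D * Δ.delta D E from
    H (ℓ (Δ.delta D E)) E hE le_rfl hadd
  intro n
  induction n with
  | zero =>
    intro E hE hle _
    have h0 : Δ.delta D E = 1 := cs.length_eq_zero_iff.mp (Nat.le_zero.mp hle)
    have hED : D = E := (Δ.delta_eq_one_iff hD.1 hE.1 hD.2 hE.2).mp h0
    subst hED
    rw [delta_self Δ hD, mul_one]
  | succ n ih =>
    intro E hE hle hadd
    rcases Nat.lt_or_ge (ℓ (Δ.delta D E)) (n + 1) with hlt | hge
    · exact ih E hE (by omega) hadd
    · have hlen : ℓ (Δ.delta D E) = n + 1 := by omega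
      have hne1 : Δ.delta D E ≠ 1 := by
        intro hc
        rw [hc, cs.length_one] at hlen
        omega
      obtain ⟨σ, hσ⟩ := cs.exists_rightDescent_of_ne_one hne1
      have hσ' : ℓ (Δ.delta D E * s σ) < ℓ (Δ.delta D E) := hσ
      have hblen : ℓ (Δ.delta D E * s σ) + 1 = ℓ (Δ.delta D E) := by
        rcases cs.length_mul_simple (Δ.delta D E) σ with h | h <;> omega
      obtain ⟨f, hfc, hfd, ⟨uD, huD⟩, ⟨uE, huE⟩⟩ :=
        Δ.pair_in_apartment hD.1 hE.1 hD.2 hE.2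
      have hfiso : Δ.IsIsometry f := ⟨fun w => ⟨(hfc w).1, (hfc w).2⟩, hfd⟩
      have hb : uD⁻¹ * uE = Δ.delta D E := by
        rw [← huD, ← huE]; exact (hfd uD uE).symm
      have hE'ch : f (uD * (Δ.delta D E * s σ)) ∈ Δ.chambers := hfiso.1 _
      have hDE' : Δ.delta D (f (uD * (Δ.delta D E * s σ))) = Δ.delta D E * s σ := by
        have h2 := hfd uD (uD * (Δ.delta D E * s σ))
        rw [huD] at h2
        rw [h2]; group
      have hE'E : Δ.delta (f (uD * (Δ.delta D E * s σ))) E = s σ := by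
        have h2 := hfd (uD * (Δ.delta D E * s σ)) uE
        rw [huE] at h2
        rw [h2, show (uD * (Δ.delta D E * s σ))⁻¹ * uE
            = (s σ)⁻¹ * (Δ.delta D E)⁻¹ * (uD⁻¹ * uE) from by group, hb, cs.inv_simple]
        group
      have haddlen : ℓ (Δ.delta C D * (Δ.delta D E * s σ))
          = ℓ (Δ.delta C D) + ℓ (Δ.delta D E * s σ) := by
        have hup : ℓ (Δ.delta C D * (Δ.delta D E * s σ))
            ≤ ℓ (Δ.delta C D) + ℓ (Δ.delta D E * s σ) := cs.length_mul_le _ _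
        have heq : Δ.delta C D * (Δ.delta D E * s σ) = (Δ.delta C D * Δ.delta D E) * s σ := by
          group
        have hlow : ℓ (Δ.delta C D * Δ.delta D E)
            ≤ ℓ ((Δ.delta C D * Δ.delta D E) * s σ) + 1 := by
          rcases cs.length_mul_simple (Δ.delta C D * Δ.delta D E) σ with h | h <;> omega
        rw [heq] at hup ⊢
        omega
      have hCE' : Δ.delta C (f (uD * (Δ.delta D E * s σ)))
          = Δ.delta C D * Δ.delta D (f (uD * (Δ.delta D E * s σ))) :=
        ih _ hE'ch (by rw [hDE']; omega) (by rw [hDE']; exact haddlen)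
      have hfin := Δ.delta_mul_simple hC.1 hE'ch.1 hE.1 hC.2 hE'ch.2 hE.2 σ hE'E (by
        rw [hCE', hDE']
        have heq2 : Δ.delta C D * (Δ.delta D E * s σ) * s σ = Δ.delta C D * Δ.delta D E := by
          rw [show Δ.delta C D * (Δ.delta D E * s σ) * s σ
              = Δ.delta C D * Δ.delta D E * (s σ * s σ) by group,
            cs.simple_mul_simple_self, mul_one]
        rw [heq2, hadd, haddlen]
        omega)
      rw [hfin, hCE', hDE']
      rw [show Δ.delta C D * (Δ.delta D E * s σ) * s σ
          = Δ.delta C D * Δ.delta D E * (s σ * s σ) by group,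
        cs.simple_mul_simple_self, mul_one]

lemma card_inter_panel {P C D : Finset V} (hP : Δ.IsPanel P) (hC : C ∈ Δ.chambers)
    (hD : D ∈ Δ.chambers) (hPC : P ⊆ C) (hPD : P ⊆ D) (hne : C ≠ D) :
    (C ∩ D).card + 1 = Δ.rank := by
  have hsub : P ⊆ C ∩ D := Finset.subset_inter hPC hPD
  have h1 : P.card ≤ (C ∩ D).card := Finset.card_le_card hsub
  have h2 : (C ∩ D).card ≤ Δ.rank := by
    have := Finset.card_le_card (Finset.inter_subset_left : C ∩ D ⊆ C)
    rw [hC.2] at this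
    exact this
  have h3 : (C ∩ D).card ≠ Δ.rank := by
    intro hcard
    have hCD : C ∩ D = C := by
      apply Finset.eq_of_subset_of_card_le Finset.inter_subset_left
      rw [hcard, hC.2]
    have hCsubD : C ⊆ D := by
      rw [← hCD]
      exact Finset.inter_subset_right
    exact hne (chamber_eq_of_subset Δ hC hD hCsubD)
  have h4 := hP.2
  omega

/-- All chambers containing a panel `P` and distinct from a fixed chamber `C ⊇ P`
are at the same Weyl distance from `C`. -/
lemma delta_panel {P C E E' : Finset V} (hP : Δ.IsPanel P) (hC : C ∈ Δ.chambers)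
    (hE : E ∈ Δ.chambers) (hE' : E' ∈ Δ.chambers) (hPC : P ⊆ C) (hPE : P ⊆ E)
    (hPE' : P ⊆ E') (hne : E ≠ C) (hne' : E' ≠ C) :
    Δ.delta C E = Δ.delta C E' := by
  obtain ⟨σ, hσ⟩ := (Δ.delta_simple_iff hC.1 hE.1 hC.2 hE.2).mpr
    ⟨Ne.symm hne, card_inter_panel Δ hP hC hE hPC hPE (Ne.symm hne)⟩
  obtain ⟨σ', hσ'⟩ := (Δ.delta_simple_iff hC.1 hE'.1 hC.2 hE'.2).mpr
    ⟨Ne.symm hne', card_inter_panel Δ hP hC hE' hPC hPE' (Ne.symm hne')⟩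
  rcases Classical.em (E = E') with heq | hneEE'
  · rw [heq]
  · obtain ⟨σ'', hσ''⟩ := (Δ.delta_simple_iff hE.1 hE'.1 hE.2 hE'.2).mpr
      ⟨hneEE', card_inter_panel Δ hP hE hE' hPE hPE' hneEE'⟩
    rcases Δ.delta_triangle hC.1 hE.1 hE'.1 hC.2 hE.2 hE'.2 σ'' hσ'' with h | h
    · exact h.symm
    · exfalso
      have hpar := cs.length_mul_mod_two (Δ.delta C E) (s σ'')
      rw [← h, hσ, hσ'] at hpar
      rw [cs.length_simple, cs.length_simple, cs.length_simple] at hpar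
      omega

lemma mem_genBy_iff {f : W → Finset V} {S : Set W} {A : Finset V} :
    A ∈ Δ.genBy f S ↔ ∃ w ∈ S, A ⊆ f w := Iff.rfl

lemma ch_genBy {f : W → Finset V} (hf : Δ.IsIsometry f) {S : Set W} {C : Finset V} :
    C ∈ Δ.Ch (Δ.genBy f S) ↔ ∃ w ∈ S, C = f w := by
  constructor
  · rintro ⟨⟨w, hw, hsub⟩, hch⟩
    exact ⟨w, hw, chamber_eq_of_subset Δ hch (hf.1 w) hsub⟩
  · rintro ⟨w, hw, rfl⟩
    exact ⟨⟨w, hw, subset_rfl⟩, hf.1 w⟩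

lemma ch_aptOf {g : W → Finset V} (hg : Δ.IsIsometry g) {C : Finset V} :
    C ∈ Δ.Ch (Δ.aptOf g) ↔ ∃ w, C = g w := by
  unfold Building.aptOf
  rw [ch_genBy Δ hg]
  simp

/-- Normal form for roots: every root is generated by the standard positive
half-space of some simple reflection in a suitable isometry. -/
lemma normalize {α Mw : Set (Finset V)} (h : Δ.IsRootWithWall α Mw) :
    ∃ (f : W → Finset V) (i : B), Δ.IsIsometry f ∧
      α = Δ.genBy f {w | Pos cs i w} ∧
      Mw = Δ.genBy f {w | Pos cs i w} ∩ Δ.genBy f {w | ¬ Pos cs i w} := by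
  obtain ⟨f0, H, hiso, ⟨w0, i, hH⟩, hα, hMw⟩ := h
  have hHiff : ∀ v, v ∈ H ↔ Pos cs i (w0⁻¹ * v) := by
    intro v
    rw [hH]
    simp only [Set.mem_setOf_eq]
    unfold Pos
    rw [show (w0 * cs.simple i)⁻¹ * v = s i * (w0⁻¹ * v) by
      rw [mul_inv_rev, cs.inv_simple]; group]
  have hHciff : ∀ v, v ∈ Hᶜ ↔ ¬ Pos cs i (w0⁻¹ * v) := by
    intro v
    rw [Set.mem_compl_iff, hHiff]
  refine ⟨fun x => f0 (w0 * x), i, ⟨fun w => hiso.1 _, fun u v => by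
    rw [hiso.2]; group⟩, ?_, ?_⟩
  · rw [hα]
    ext A
    constructor
    · rintro ⟨v, hv, hsub⟩
      exact ⟨w0⁻¹ * v, (hHiff v).mp hv, by
        simpa only [show w0 * (w0⁻¹ * v) = v from by group] using hsub⟩
    · rintro ⟨x, hx, hsub⟩
      exact ⟨w0 * x, (hHiff _).mpr (by rwa [show w0⁻¹ * (w0 * x) = x by group]), by simpa using hsub⟩
  · rw [hMw]
    have h1 : Δ.genBy f0 H = Δ.genBy (fun x => f0 (w0 * x)) {w | Pos cs i w} := by
      ext A
      constructor
      · rintro ⟨v, hv, hsub⟩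
        exact ⟨w0⁻¹ * v, (hHiff v).mp hv, by
          simpa only [show w0 * (w0⁻¹ * v) = v from by group] using hsub⟩
      · rintro ⟨x, hx, hsub⟩
        exact ⟨w0 * x, (hHiff _).mpr (by rwa [show w0⁻¹ * (w0 * x) = x by group]), by simpa using hsub⟩
    have h2 : Δ.genBy f0 Hᶜ = Δ.genBy (fun x => f0 (w0 * x)) {w | ¬ Pos cs i w} := by
      ext A
      constructor
      · rintro ⟨v, hv, hsub⟩
        exact ⟨w0⁻¹ * v, (hHciff v).mp hv, by
          simpa only [show w0 * (w0⁻¹ * v) = v from by group] using hsub⟩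
      · rintro ⟨x, hx, hsub⟩
        exact ⟨w0 * x, (hHciff _).mpr (by rwa [show w0⁻¹ * (w0 * x) = x by group]), by simpa using hsub⟩
    rw [h1, h2]

end BuildingAux

end
end StatementElevenAux

/-- Let `α₁`, `α₂` be two roots of a finite-dimensional
building `Δ` having the same wall `Mw` as their boundary. Then `α₁ ∪ α₂` is
an apartment of `Δ` (in the complete apartment system) if and only if there
is a panel `P ∈ Mw` such that the chamber of `α₁` containing `P` differs from
the chamber of `α₂` containing `P`. -/
theorem statement_11 {B W V : Type*} [Group W] [DecidableEq V]
    {M : CoxeterMatrix B} {cs : CoxeterSystem M W} (Δ : Building cs V)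
    (α₁ α₂ Mw : Set (Finset V))
    (h₁ : Δ.IsRootWithWall α₁ Mw) (h₂ : Δ.IsRootWithWall α₂ Mw) :
    Δ.IsApartment (α₁ ∪ α₂) ↔
      ∃ P : Finset V, Δ.IsPanel P ∧ P ∈ Mw ∧
        ∃ C₁ C₂ : Finset V, C₁ ∈ Δ.Ch α₁ ∧ P ⊆ C₁ ∧
          C₂ ∈ Δ.Ch α₂ ∧ P ⊆ C₂ ∧ C₁ ≠ C₂ := by
  classical
  open StatementElevenAux in
  obtain ⟨f₁, i, hf₁, hα₁, hMw₁⟩ := normalize Δ h₁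
  open StatementElevenAux in
  obtain ⟨f₂, j, hf₂, hα₂, hMw₂⟩ := normalize Δ h₂
  open StatementElevenAux in
  have hpos1 : Pos cs i (1 : W) := pos_one cs i
  open StatementElevenAux in
  have hnposs : ¬ Pos cs i (cs.simple i) := not_pos_simple cs i
  open StatementElevenAux in
  constructor
  · -- forward direction
    rintro ⟨g, hg, hΩ⟩
    have hC1ch : f₁ 1 ∈ Δ.chambers := hf₁.1 1
    have hDch : f₁ (cs.simple i) ∈ Δ.chambers := hf₁.1 _
    have hδ1D : Δ.delta (f₁ 1) (f₁ (cs.simple i)) = cs.simple i := by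
      rw [hf₁.2]; group
    have hne1D : f₁ 1 ≠ f₁ (cs.simple i) := by
      intro h
      have h1 := iso_inj Δ hf₁ h
      exact hnposs (h1 ▸ hpos1)
    have hcardP := ((Δ.delta_simple_iff hC1ch.1 hDch.1 hC1ch.2 hDch.2).mp ⟨i, hδ1D⟩).2
    have hPanel : Δ.IsPanel (f₁ 1 ∩ f₁ (cs.simple i)) :=
      ⟨Δ.down_closed hC1ch.1 Finset.inter_subset_left, hcardP⟩
    have hPMw : f₁ 1 ∩ f₁ (cs.simple i) ∈ Mw := by
      rw [hMw₁]
      exact ⟨⟨1, hpos1, Finset.inter_subset_left⟩,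
        ⟨cs.simple i, hnposs, Finset.inter_subset_right⟩⟩
    have hPMw2 := hPMw
    rw [hMw₂] at hPMw2
    obtain ⟨⟨a, ha, hPa⟩, ⟨b, hb, hPb⟩⟩ := hPMw2
    by_cases hcase : f₂ a = f₁ 1
    · exfalso
      have hC1mem : f₁ 1 ∈ Δ.Ch (Δ.aptOf g) := by
        rw [← hΩ]
        exact ⟨Or.inl (by rw [hα₁]; exact ⟨1, hpos1, subset_rfl⟩), hC1ch⟩
      obtain ⟨x₀, hx₀⟩ := (ch_aptOf Δ hg).mp hC1mem
      have hEch : g (x₀ * cs.simple i) ∈ Δ.chambers := hg.1 _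
      have hEmem : g (x₀ * cs.simple i) ∈ α₁ ∪ α₂ := by
        rw [hΩ]
        exact ⟨x₀ * cs.simple i, Set.mem_univ _, subset_rfl⟩
      have hδE : Δ.delta (f₁ 1) (g (x₀ * cs.simple i)) = cs.simple i := by
        rw [hx₀, hg.2]; group
      rcases hEmem with hE1 | hE2
      · rw [hα₁] at hE1
        obtain ⟨w', hw', hsubw'⟩ := hE1
        have hEw' : g (x₀ * cs.simple i) = f₁ w' :=
          chamber_eq_of_subset Δ hEch (hf₁.1 w') hsubw'
        have hδw' : Δ.delta (f₁ 1) (f₁ w') = w' := by rw [hf₁.2]; group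
        rw [hEw', hδw'] at hδE
        exact hnposs (hδE ▸ hw')
      · rw [hα₂] at hE2
        obtain ⟨b', hb', hsubb'⟩ := hE2
        have hEb' : g (x₀ * cs.simple i) = f₂ b' :=
          chamber_eq_of_subset Δ hEch (hf₂.1 b') hsubb'
        have hb'eq : b' = a * cs.simple i := by
          have h3 : a⁻¹ * b' = cs.simple i := by
            rw [← hf₂.2 a b', hcase, ← hEb']
            exact hδE
          rw [← h3]; group
        have hfbne : f₂ b ≠ f₁ 1 := by
          intro hcb
          have h4 : b = a := iso_inj Δ hf₂ (by rw [hcb, ← hcase])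
          exact hb (h4 ▸ ha)
        have hδCb : Δ.delta (f₁ 1) (f₂ b) = cs.simple i := by
          have h5 := delta_panel Δ hPanel hC1ch hDch (hf₂.1 b) Finset.inter_subset_left
            Finset.inter_subset_right hPb (Ne.symm hne1D) hfbne
          rw [← h5]
          exact hδ1D
        have hbeq : b = a * cs.simple i := by
          have h6 : a⁻¹ * b = cs.simple i := by rw [← hf₂.2 a b, hcase, hδCb]
          rw [← h6]; group
        rw [hbeq] at hb
        rw [hb'eq] at hb'
        exact hb hb'
    · refine ⟨f₁ 1 ∩ f₁ (cs.simple i), hPanel, hPMw, f₁ 1, f₂ a, ?_,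
        Finset.inter_subset_left, ?_, hPa, fun hcc => hcase hcc.symm⟩
      · exact ⟨by rw [hα₁]; exact ⟨1, hpos1, subset_rfl⟩, hC1ch⟩
      · exact ⟨by rw [hα₂]; exact ⟨a, ha, subset_rfl⟩, hf₂.1 a⟩
  · -- backward direction
    rintro ⟨P, hPanel, hPMw, C₁, C₂, hC₁ch, hPC₁, hC₂ch, hPC₂, hne⟩
    obtain ⟨hC₁α, hC₁chamb⟩ := hC₁ch
    obtain ⟨hC₂α, hC₂chamb⟩ := hC₂ch
    rw [hα₁] at hC₁α
    obtain ⟨p, hp, hsubp⟩ := hC₁α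
    have hC1p : C₁ = f₁ p := chamber_eq_of_subset Δ hC₁chamb (hf₁.1 p) hsubp
    rw [hα₂] at hC₂α
    obtain ⟨q, hq, hsubq⟩ := hC₂α
    have hC2q : C₂ = f₂ q := chamber_eq_of_subset Δ hC₂chamb (hf₂.1 q) hsubq
    have hPMw1 := hPMw
    rw [hMw₁] at hPMw1
    obtain ⟨-, ⟨p'', hp'', hPp''⟩⟩ := hPMw1
    have hPMw2 := hPMw
    rw [hMw₂] at hPMw2
    obtain ⟨-, ⟨q'', hq'', hPq''⟩⟩ := hPMw2
    -- the wall-adjacency data on the f₁-side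
    have hfp''ne : f₁ p'' ≠ C₁ := by
      intro hcb
      have h1 : p'' = p := iso_inj Δ hf₁ (by rw [hcb, hC1p])
      exact hp'' (h1 ▸ hp)
    obtain ⟨σ, hσ⟩ := (Δ.delta_simple_iff hC₁chamb.1 (hf₁.1 p'').1 hC₁chamb.2
      (hf₁.1 p'').2).mpr ⟨Ne.symm hfp''ne,
        card_inter_panel Δ hPanel hC₁chamb (hf₁.1 p'') hPC₁ hPp'' (Ne.symm hfp''ne)⟩
    have hδp'' : p⁻¹ * p'' = cs.simple σ := by
      rw [← hf₁.2 p p'', ← hC1p]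
      exact hσ
    have hp''eq : p'' = p * cs.simple σ := by rw [← hδp'']; group
    have hwall_p : cs.simple i * p = p * cs.simple σ :=
      (cx1 cs hp).mpr (by rw [← hp''eq]; exact hp'')
    have hs1 : p⁻¹ * (cs.simple i * p) = cs.simple σ := by
      rw [hwall_p]; group
    -- the wall-adjacency data on the f₂-side
    have hfq''ne : f₂ q'' ≠ C₂ := by
      intro hcb
      have h1 : q'' = q := iso_inj Δ hf₂ (by rw [hcb, hC2q])
      exact hq'' (h1 ▸ hq)
    obtain ⟨σ', hσ'⟩ := (Δ.delta_simple_iff hC₂chamb.1 (hf₂.1 q'').1 hC₂chamb.2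
      (hf₂.1 q'').2).mpr ⟨Ne.symm hfq''ne,
        card_inter_panel Δ hPanel hC₂chamb (hf₂.1 q'') hPC₂ hPq'' (Ne.symm hfq''ne)⟩
    have hδq'' : q⁻¹ * q'' = cs.simple σ' := by
      rw [← hf₂.2 q q'', ← hC2q]
      exact hσ'
    have hq''eq : q'' = q * cs.simple σ' := by rw [← hδq'']; group
    have hwall_q : cs.simple j * q = q * cs.simple σ' :=
      (cx1 cs hq).mpr (by rw [← hq''eq]; exact hq'')
    have hs2 : q⁻¹ * (cs.simple j * q) = cs.simple σ' := by
      rw [hwall_q]; group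
    -- the two roots are glued along the same simple reflection
    have hδ12 : Δ.delta C₁ C₂ = cs.simple σ := by
      have h := delta_panel Δ hPanel hC₁chamb (hf₁.1 p'') hC₂chamb hPC₁ hPp'' hPC₂
        hfp''ne (Ne.symm hne)
      rw [← h]
      exact hσ
    have hδ21 : Δ.delta C₂ C₁ = cs.simple σ' := by
      have h := delta_panel Δ hPanel hC₂chamb (hf₂.1 q'') hC₁chamb hPC₂ hPq'' hPC₁
        hfq''ne hne
      rw [← h]
      exact hσ'
    have hss' : cs.simple σ' = cs.simple σ := by
      have h := Δ.delta_inv C₁ C₂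
      rw [hδ21, hδ12, cs.inv_simple] at h
      exact h
    have hs : p⁻¹ * (cs.simple i * p) = q⁻¹ * (cs.simple j * q) := by
      rw [hs1, hs2, hss']
    have hs2' : q⁻¹ * (cs.simple j * q) = cs.simple σ := by rw [hs2, hss']
    have hslen : cs.length (cs.simple σ) = 1 := cs.length_simple σ
    have hδ21' : Δ.delta C₂ C₁ = cs.simple σ := by rw [hδ21, hss']
    -- the key matching of wall chambers (ACC)
    have acc : ∀ y : W, Pos cs i y → cs.length (y⁻¹ * (cs.simple i * y)) = 1 →
        Δ.delta (f₁ y) (f₂ (q * (p⁻¹ * y))) = y⁻¹ * (cs.simple i * y) := by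
      intro y hy hy1
      have hsiy_ne : cs.simple i * y ≠ y := by
        intro hceq
        have h1 := cs.length_simple_mul_ne y i
        rw [hceq] at h1
        exact h1 rfl
      have hfy_ne : f₁ (cs.simple i * y) ≠ f₁ y := fun hc => hsiy_ne (iso_inj Δ hf₁ hc)
      have hδy : Δ.delta (f₁ y) (f₁ (cs.simple i * y)) = y⁻¹ * (cs.simple i * y) := hf₁.2 _ _
      obtain ⟨σy, hσy⟩ := cs.length_eq_one_iff.mp hy1
      have hcard_y := ((Δ.delta_simple_iff (hf₁.1 y).1 (hf₁.1 (cs.simple i * y)).1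
        (hf₁.1 y).2 (hf₁.1 (cs.simple i * y)).2).mp ⟨σy, by rw [hδy, hσy]⟩).2
      have hPy : Δ.IsPanel (f₁ y ∩ f₁ (cs.simple i * y)) :=
        ⟨Δ.down_closed (hf₁.1 y).1 Finset.inter_subset_left, hcard_y⟩
      have hnpossy : ¬ Pos cs i (cs.simple i * y) := fun hc =>
        ((pos_simple_mul_iff cs i y).mp hc) hy
      have hPyMw : f₁ y ∩ f₁ (cs.simple i * y) ∈ Mw := by
        rw [hMw₁]
        exact ⟨⟨y, hy, Finset.inter_subset_left⟩,
          ⟨cs.simple i * y, hnpossy, Finset.inter_subset_right⟩⟩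
      rw [hMw₂] at hPyMw
      obtain ⟨⟨a, ha, hPya⟩, ⟨b, hb, hPyb⟩⟩ := hPyMw
      have hab_ne : f₂ a ≠ f₂ b := fun hc => hb ((iso_inj Δ hf₂ hc) ▸ ha)
      obtain ⟨σab, hσab⟩ := (Δ.delta_simple_iff (hf₂.1 a).1 (hf₂.1 b).1 (hf₂.1 a).2
        (hf₂.1 b).2).mpr ⟨hab_ne, card_inter_panel Δ hPy (hf₂.1 a) (hf₂.1 b) hPya hPyb hab_ne⟩
      have hδab : a⁻¹ * b = cs.simple σab := by rw [← hf₂.2 a b, hσab]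
      have hbeq : b = a * cs.simple σab := by rw [← hδab]; group
      have hwall_a : cs.simple j * a = a * cs.simple σab :=
        (cx1 cs ha).mpr (by rw [← hbeq]; exact hb)
      have ha1 : cs.length (a⁻¹ * (cs.simple j * a)) = 1 := by
        rw [hwall_a, show a⁻¹ * (a * cs.simple σab) = cs.simple σab from by group,
          cs.length_simple]
      have hpy_add : cs.length (p⁻¹ * (cs.simple i * y)) = cs.length (p⁻¹ * y) + 1 :=
        cx2' cs hp hy hy1
      have hδC1y : Δ.delta C₁ (f₁ y) = p⁻¹ * y := by rw [hC1p]; exact hf₁.2 p y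
      -- f₂ a is not the α₁-side chamber
      have hfa_ne : f₂ a ≠ f₁ y := by
        intro heq
        have d_int : Δ.delta C₂ (f₁ y) = q⁻¹ * a := by
          rw [hC2q, ← heq]
          exact hf₂.2 q a
        have hgeo_add : cs.length (Δ.delta C₂ C₁ * Δ.delta C₁ (f₁ y))
            = cs.length (Δ.delta C₂ C₁) + cs.length (Δ.delta C₁ (f₁ y)) := by
          rw [hδ21', hδC1y,
            show cs.simple σ * (p⁻¹ * y) = p⁻¹ * (cs.simple i * y) from by
              rw [← hs1]; group,
            hslen]
          omega
        have d_geo : Δ.delta C₂ (f₁ y) = cs.simple σ * (p⁻¹ * y) := by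
          rw [delta_comp Δ hC₂chamb hC₁chamb (hf₁.1 y) hgeo_add, hδ21', hδC1y]
        have haeq' : a = (q * p⁻¹ * cs.simple i) * y := by
          have h3 : q⁻¹ * a = cs.simple σ * (p⁻¹ * y) := by rw [← d_int, d_geo]
          have h4 : a = q * (cs.simple σ * (p⁻¹ * y)) := by rw [← h3]; group
          rw [h4, ← hs1]; group
        exact ((cx3ab cs hp hq hs y).mp (haeq' ▸ ha)) hy
      -- f₂ a is adjacent to f₁ y across the wall panel
      have hδya : Δ.delta (f₁ y) (f₂ a) = y⁻¹ * (cs.simple i * y) := by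
        have h := delta_panel Δ hPy (hf₁.1 y) (hf₁.1 (cs.simple i * y)) (hf₂.1 a)
          Finset.inter_subset_left Finset.inter_subset_right hPya hfy_ne hfa_ne
        rw [← h]
        exact hδy
      -- two computations of the distance from C₁ to f₂ a
      have hδC1a : Δ.delta C₁ (f₂ a) = p⁻¹ * (cs.simple i * y) := by
        have hadd3 : cs.length (Δ.delta C₁ (f₁ y) * Δ.delta (f₁ y) (f₂ a))
            = cs.length (Δ.delta C₁ (f₁ y)) + cs.length (Δ.delta (f₁ y) (f₂ a)) := by
          rw [hδC1y, hδya,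
            show (p⁻¹ * y) * (y⁻¹ * (cs.simple i * y)) = p⁻¹ * (cs.simple i * y) from by
              group,
            hy1]
          omega
        rw [delta_comp Δ hC₁chamb (hf₁.1 y) (hf₂.1 a) hadd3, hδC1y, hδya]
        group
      have hδC2a : Δ.delta C₂ (f₂ a) = q⁻¹ * a := by
        rw [hC2q]
        exact hf₂.2 q a
      have hqa_add : cs.length (q⁻¹ * (cs.simple j * a)) = cs.length (q⁻¹ * a) + 1 :=
        cx2' cs hq ha ha1
      have hδC1a' : Δ.delta C₁ (f₂ a) = cs.simple σ * (q⁻¹ * a) := by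
        have hadd4 : cs.length (Δ.delta C₁ C₂ * Δ.delta C₂ (f₂ a))
            = cs.length (Δ.delta C₁ C₂) + cs.length (Δ.delta C₂ (f₂ a)) := by
          rw [hδ12, hδC2a,
            show cs.simple σ * (q⁻¹ * a) = q⁻¹ * (cs.simple j * a) from by
              rw [← hs2']; group,
            hslen]
          omega
        rw [delta_comp Δ hC₁chamb hC₂chamb (hf₂.1 a) hadd4, hδ12, hδC2a]
      -- hence a = q * (p⁻¹ * y)
      have haeq : a = q * (p⁻¹ * y) := by
        have h5 : cs.simple σ * (q⁻¹ * a) = p⁻¹ * (cs.simple i * y) := by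
          rw [← hδC1a', hδC1a]
        have h6 : q⁻¹ * a = cs.simple σ * (p⁻¹ * (cs.simple i * y)) := by
          rw [← h5,
            show cs.simple σ * (cs.simple σ * (q⁻¹ * a))
              = (cs.simple σ * cs.simple σ) * (q⁻¹ * a) from by group,
            cs.simple_mul_simple_self, one_mul]
        have h7 : cs.simple σ * (p⁻¹ * (cs.simple i * y)) = p⁻¹ * y := by
          rw [← hs1,
            show (p⁻¹ * (cs.simple i * p)) * (p⁻¹ * (cs.simple i * y))
              = p⁻¹ * (cs.simple i * (cs.simple i * y)) from by group,
            cs.simple_mul_simple_cancel_left]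
        rw [h7] at h6
        rw [← h6]; group
      rw [← haeq]
      exact hδya
    -- the cross-distance formula
    have cross : ∀ u v : W, Pos cs i u → ¬ Pos cs i v →
        Δ.delta (f₁ u) (f₂ ((q * p⁻¹ * cs.simple i) * v)) = u⁻¹ * v := by
      intro u v hu hv
      obtain ⟨y, hy, hy1, hadd1, hadd2⟩ := cx4 cs hu hv
      have hA2 : Δ.delta (f₁ y) (f₂ (q * (p⁻¹ * y))) = y⁻¹ * (cs.simple i * y) :=
        acc y hy hy1
      have hA3 : Δ.delta (f₁ u) (f₂ (q * (p⁻¹ * y))) = u⁻¹ * (cs.simple i * y) := by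
        have hadd3 : cs.length (Δ.delta (f₁ u) (f₁ y) * Δ.delta (f₁ y) (f₂ (q * (p⁻¹ * y))))
            = cs.length (Δ.delta (f₁ u) (f₁ y))
              + cs.length (Δ.delta (f₁ y) (f₂ (q * (p⁻¹ * y)))) := by
          rw [hf₁.2, hA2,
            show (u⁻¹ * y) * (y⁻¹ * (cs.simple i * y)) = u⁻¹ * (cs.simple i * y) from by
              group,
            hy1]
          omega
        rw [delta_comp Δ (hf₁.1 u) (hf₁.1 y) (hf₂.1 (q * (p⁻¹ * y))) hadd3, hf₁.2, hA2]
        group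
      have hA4 : Δ.delta (f₂ (q * (p⁻¹ * y))) (f₂ ((q * p⁻¹ * cs.simple i) * v))
          = (cs.simple i * y)⁻¹ * v := by
        rw [hf₂.2,
          show (q * (p⁻¹ * y))⁻¹ * ((q * p⁻¹ * cs.simple i) * v)
            = y⁻¹ * (cs.simple i * v) from by group,
          show (cs.simple i * y)⁻¹ * v = y⁻¹ * ((cs.simple i)⁻¹ * v) from by group,
          cs.inv_simple]
      have hadd5 : cs.length (Δ.delta (f₁ u) (f₂ (q * (p⁻¹ * y)))
            * Δ.delta (f₂ (q * (p⁻¹ * y))) (f₂ ((q * p⁻¹ * cs.simple i) * v)))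
          = cs.length (Δ.delta (f₁ u) (f₂ (q * (p⁻¹ * y))))
            + cs.length (Δ.delta (f₂ (q * (p⁻¹ * y))) (f₂ ((q * p⁻¹ * cs.simple i) * v))) := by
        rw [hA3, hA4,
          show (u⁻¹ * (cs.simple i * y)) * ((cs.simple i * y)⁻¹ * v) = u⁻¹ * v from by
            group]
        omega
      rw [delta_comp Δ (hf₁.1 u) (hf₂.1 (q * (p⁻¹ * y)))
        (hf₂.1 ((q * p⁻¹ * cs.simple i) * v)) hadd5, hA3, hA4]
      group
    -- assemble the glued isometry
    refine ⟨fun v => if Pos cs i v then f₁ v else f₂ ((q * p⁻¹ * cs.simple i) * v),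
      ⟨?_, ?_⟩, ?_⟩
    · intro w
      by_cases hw : Pos cs i w
      · simpa only [if_pos hw] using hf₁.1 w
      · simpa only [if_neg hw] using hf₂.1 ((q * p⁻¹ * cs.simple i) * w)
    · intro u v
      by_cases hu : Pos cs i u <;> by_cases hv : Pos cs i v
      · simp only [if_pos hu, if_pos hv]
        exact hf₁.2 u v
      · simp only [if_pos hu, if_neg hv]
        exact cross u v hu hv
      · simp only [if_neg hu, if_pos hv]
        have h := Δ.delta_inv (f₁ v) (f₂ ((q * p⁻¹ * cs.simple i) * u))
        rw [cross v u hv hu] at h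
        rw [h]
        group
      · simp only [if_neg hu, if_neg hv]
        rw [hf₂.2]
        group
    · rw [hα₁, hα₂]
      ext A
      constructor
      · rintro (⟨w, hw, hsub⟩ | ⟨a, ha', hsub⟩)
        · have hw' : Pos cs i w := hw
          exact ⟨w, Set.mem_univ _, by simpa only [if_pos hw'] using hsub⟩
        · refine ⟨(q * p⁻¹ * cs.simple i)⁻¹ * a, Set.mem_univ _, ?_⟩
          have hna := cx3c cs hp hq hs ha'
          simp only [if_neg hna]
          rwa [show (q * p⁻¹ * cs.simple i) * ((q * p⁻¹ * cs.simple i)⁻¹ * a) = a from by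
            group]
      · rintro ⟨w, -, hsub⟩
        by_cases hw : Pos cs i w
        · left
          exact ⟨w, hw, by simpa only [if_pos hw] using hsub⟩
        · right
          exact ⟨(q * p⁻¹ * cs.simple i) * w, (cx3ab cs hp hq hs w).mpr hw,
            by simpa only [if_neg hw] using hsub⟩

end IntersectionsOfApartments
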